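/- Let F be a ∪-closed family whose base B contains the empty set. Then F is well-graded if and only if for every K in B there is a tight path in F from the empty set to K. -/

import Mathlib

open Finset

variable {α : Type*} [DecidableEq α]

/-- The span of a family `G`: all unions of nonempty subfamilies of `G`. -/
def Span (G : Finset (Finset α)) : Finset (Finset α) :=
  (G.powerset.filter Finset.Nonempty).image fun H => H.sup id

/-- A family is ∪-closed if it contains the union of each of its nonempty subfamilies. -/
def UnionClosed (F : Finset (Finset α)) : Prop :=
  ∀ H ⊆ F, H.Nonempty → H.sup id ∈ F

/-- `p` is a tight path from `P` to `Q` inside the family `F`. -/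
def IsTightPath (F : Finset (Finset α)) (P Q : Finset α) (p : List (Finset α)) : Prop :=
  p.head? = some P ∧ p.getLast? = some Q ∧
  p.length = (symmDiff P Q).card + 1 ∧
  (∀ S ∈ p, S ∈ F) ∧
  List.Chain' (fun A B => (symmDiff A B).card = 1) p

/-- A family is well-graded if any two distinct members are joined by a tight path. -/
def WellGraded (F : Finset (Finset α)) : Prop :=
  ∀ P ∈ F, ∀ Q ∈ F, P ≠ Q → ∃ p, IsTightPath F P Q p

/-- `B` is a base of `F`: a minimal subfamily of `F` spanning `F`. -/
def IsBase (B F : Finset (Finset α)) : Prop :=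
  B ⊆ F ∧ Span B = F ∧ ∀ H ⊆ B, Span H = F → H = B

/-- `A` is an atom of `F` at `x`: an inclusion-minimal member of `F` containing `x`. -/
def IsAtomAt (F : Finset (Finset α)) (x : α) (A : Finset α) : Prop :=
  A ∈ F ∧ x ∈ A ∧ ∀ B ∈ F, x ∈ B → B ⊆ A → B = A

/-- `A` is an atom of `F`: either the empty set (if it is in `F`) or an atom at some point. -/
def IsAtomOf (F : Finset (Finset α)) (A : Finset α) : Prop :=
  (A = ∅ ∧ A ∈ F) ∨ ∃ x, IsAtomAt F x A

/-- The surmise function: the collection of atoms of `F` at `x`. -/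
def surmise (F : Finset (Finset α)) (x : α) : Finset (Finset α) :=
  F.filter fun A => x ∈ A ∧ ∀ B ∈ F, x ∈ B → B ⊆ A → B = A

/-- `{σ(x) : x ∈ ∪F}` forms a partition of `B \ {∅}`. -/
def SurmisePartition (F B : Finset (Finset α)) : Prop :=
  (∀ x ∈ F.sup id, ∀ y ∈ F.sup id,
      surmise F x = surmise F y ∨ Disjoint (surmise F x) (surmise F y)) ∧
  (F.sup id).sup (surmise F) = B.erase ∅

/-- The endpoints of `X` in the family `B`: elements of `X` lying in no proper
subset of `X` belonging to `B`. -/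
def endpoints (B : Finset (Finset α)) (X : Finset α) : Finset α :=
  X \ (B.filter fun Y => Y ⊂ X).sup id

/-- A family is discriminative if points contained in the same members are equal. -/
def Discriminative (F : Finset (Finset α)) : Prop :=
  ∀ u ∈ F.sup id, ∀ v ∈ F.sup id, (∀ S ∈ F, (u ∈ S ↔ v ∈ S)) → u = v

/-! ### Auxiliary machinery -/

/-- An increasing chain in `F` from `∅` up to a set, adding one element at a time. -/
inductive ChainTo (F : Finset (Finset α)) : Finset α → Prop where
  | nil : (∅ : Finset α) ∈ F → ChainTo F ∅
  | cons {A : Finset α} (x : α) : ChainTo F A → x ∉ A → insert x A ∈ F →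
      ChainTo F (insert x A)

lemma ChainTo.mem_family {F : Finset (Finset α)} {K : Finset α} (h : ChainTo F K) : K ∈ F := by
  cases h with
  | nil h => exact h
  | cons x _ _ h => exact h

lemma pair_union_mem {F : Finset (Finset α)} (hF : UnionClosed F) {A C : Finset α}
    (hA : A ∈ F) (hC : C ∈ F) : A ∪ C ∈ F := by
  have h := hF {A, C} (by
    intro S hS
    rcases mem_insert.mp hS with rfl | hS
    · exact hA
    · rcases mem_singleton.mp hS with rfl; exact hC) ⟨A, by simp⟩
  simpa [Finset.sup_insert, Finset.sup_singleton, Finset.sup_eq_union] using h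

/-- Removal lemma: if `K` has a chain and `K ⊄ L`, one can delete a point from `L ∪ K`
staying in `F`. -/
lemma ChainTo.removal {F : Finset (Finset α)} (hF : UnionClosed F) {K : Finset α}
    (h : ChainTo F K) : ∀ L ∈ F, ¬ K ⊆ L → ∃ x, x ∉ L ∧ x ∈ K ∧ (L ∪ K) \ {x} ∈ F := by
  induction h with
  | nil _ => intro L _ hKL; exact absurd (empty_subset L) hKL
  | @cons A x hA hx hmem ih =>
    intro L hL hKL
    by_cases hxL : x ∈ L
    · have hAL : ¬ A ⊆ L := fun h => hKL (insert_subset hxL h)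
      obtain ⟨x', hx'L, hx'A, hmem'⟩ := ih L hL hAL
      refine ⟨x', hx'L, mem_insert_of_mem hx'A, ?_⟩
      have heq : L ∪ insert x A = L ∪ A := by
        ext z
        simp only [mem_union, mem_insert]
        rcases eq_or_ne z x with rfl | h
        · simp [hxL]
        · simp [h]
      rw [heq]; exact hmem'
    · refine ⟨x, hxL, mem_insert_self _ _, ?_⟩
      have heq : (L ∪ insert x A) \ {x} = L ∪ A := by
        ext z
        simp only [mem_sdiff, mem_union, mem_insert, mem_singleton]
        rcases eq_or_ne z x with rfl | h
        · simp [hxL, hx]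
        · simp [h]
      rw [heq]; exact pair_union_mem hF hL hA.mem_family

/-- Exchange lemma: if `Q` has a chain and `Q ⊄ P`, one can add a point of `Q` to `P`
staying in `F`. -/
lemma ChainTo.exchange {F : Finset (Finset α)} (hF : UnionClosed F) {Q : Finset α}
    (h : ChainTo F Q) : ∀ P ∈ F, ¬ Q ⊆ P → ∃ x, x ∈ Q ∧ x ∉ P ∧ insert x P ∈ F := by
  induction h with
  | nil _ => intro P _ hQP; exact absurd (empty_subset P) hQP
  | @cons A x hA hx hmem ih =>
    intro P hP hQP
    by_cases hAP : A ⊆ P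
    · have hxP : x ∉ P := fun h => hQP (insert_subset h hAP)
      refine ⟨x, mem_insert_self _ _, hxP, ?_⟩
      have heq : insert x P = P ∪ insert x A := by
        ext z
        simp only [mem_insert, mem_union]
        rcases eq_or_ne z x with rfl | h
        · simp
        · simp only [h, false_or]
          exact ⟨Or.inl, fun hzz => hzz.elim id fun hz => hAP hz⟩
      rw [heq]; exact pair_union_mem hF hP hmem
    · obtain ⟨x', h1, h2, h3⟩ := ih P hP hAP
      exact ⟨x', mem_insert_of_mem h1, h2, h3⟩

lemma card_symmDiff_triangle (A C K : Finset α) :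
    (symmDiff A K).card ≤ (symmDiff A C).card + (symmDiff C K).card :=
  le_trans (card_le_card (symmDiff_triangle A C K)) (card_union_le _ _)

/-- Along a unit-step chain, the head is within `length - 1` of the last element. -/
lemma head_symmDiff_le : ∀ (p : List (Finset α)) (A K : Finset α), p.head? = some A →
    p.getLast? = some K → List.Chain' (fun X Y => (symmDiff X Y).card = 1) p →
    (symmDiff A K).card + 1 ≤ p.length
  | [], A, K => by simp
  | [A'], A, K => by
    intro h1 h2 _
    simp only [List.head?_cons, Option.some_inj] at h1
    simp only [List.getLast?_singleton, Option.some_inj] at h2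
    subst h1; subst h2
    simp [symmDiff_self]
  | A' :: C :: rest, A, K => by
    intro h1 h2 h3
    simp only [List.head?_cons, Option.some_inj] at h1
    subst h1
    rw [List.getLast?_cons_cons] at h2
    replace h3 := List.isChain_cons_cons.mp h3
    have ih := head_symmDiff_le (C :: rest) C K rfl h2 h3.2
    have htri := card_symmDiff_triangle A' C K
    have h31 := h3.1
    simp only [List.length_cons] at ih ⊢
    omega

/-- A unit step that decreases the distance to `K ⊇ A` must insert a point of `K`. -/
lemma step_incr {A C K : Finset α} (hAK : A ⊆ K) (h1 : (symmDiff A C).card = 1)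
    (h2 : (symmDiff C K).card + 1 = (symmDiff A K).card) :
    ∃ x, x ∈ K ∧ x ∉ A ∧ C = insert x A := by
  obtain ⟨y, hy⟩ := card_eq_one.mp h1
  have hymem : y ∈ symmDiff A C := hy ▸ mem_singleton_self y
  have hext : ∀ z, z ≠ y → (z ∈ A ↔ z ∈ C) := by
    intro z hz
    have hz2 : z ∉ symmDiff A C := by rw [hy]; simpa using hz
    rw [Finset.mem_symmDiff] at hz2
    tauto
  rw [Finset.mem_symmDiff] at hymem
  rcases hymem with ⟨hyA, hyC⟩ | ⟨hyC, hyA⟩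
  · exfalso
    have hBK : symmDiff C K = insert y (symmDiff A K) := by
      ext z
      rcases eq_or_ne z y with rfl | hz
      · simp [Finset.mem_symmDiff, hyC, hAK hyA]
      · simp only [Finset.mem_symmDiff, mem_insert, hz, false_or, ← hext z hz]
    have hynot : y ∉ symmDiff A K := by
      simp [Finset.mem_symmDiff, hyA, hAK hyA]
    rw [hBK, card_insert_of_notMem hynot] at h2
    omega
  · have hC : C = insert y A := by
      ext z
      rcases eq_or_ne z y with rfl | hz
      · simp [hyC]
      · simp only [mem_insert, hz, false_or, ← hext z hz]
    by_cases hyK : y ∈ K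
    · exact ⟨y, hyK, hyA, hC⟩
    · exfalso
      have hBK : symmDiff C K = insert y (symmDiff A K) := by
        ext z
        rcases eq_or_ne z y with rfl | hz
        · simp [Finset.mem_symmDiff, hyC, hyK]
        · simp only [Finset.mem_symmDiff, mem_insert, hz, false_or, ← hext z hz]
      have hynot : y ∉ symmDiff A K := by
        simp [Finset.mem_symmDiff, hyA, hyK]
      rw [hBK, card_insert_of_notMem hynot] at h2
      omega

/-- A tight path from `A ⊆ K` up to `K` yields an increasing chain; in particular it
extends a chain to `A` into a chain to `K`. -/
lemma chainTo_of_path {F : Finset (Finset α)} : ∀ (p : List (Finset α)) (A K : Finset α),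
    p.head? = some A → p.getLast? = some K → p.length = (symmDiff A K).card + 1 →
    (∀ S ∈ p, S ∈ F) → List.Chain' (fun X Y => (symmDiff X Y).card = 1) p →
    A ⊆ K → ChainTo F A → ChainTo F K
  | [], A, K => by simp
  | [A'], A, K => by
    intro h1 h2 _ _ _ _ hA
    simp only [List.head?_cons, Option.some_inj] at h1
    simp only [List.getLast?_singleton, Option.some_inj] at h2
    subst h1; subst h2; exact hA
  | A' :: C :: rest, A, K => by
    intro h1 h2 h3 h4 h5 hAK hA
    simp only [List.head?_cons, Option.some_inj] at h1
    subst h1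
    rw [List.getLast?_cons_cons] at h2
    replace h5 := List.isChain_cons_cons.mp h5
    have hle := head_symmDiff_le (C :: rest) C K rfl h2 h5.2
    have htri := card_symmDiff_triangle A' C K
    have h51 := h5.1
    simp only [List.length_cons] at h3 hle
    have hCK : (symmDiff C K).card + 1 = (symmDiff A' K).card := by omega
    obtain ⟨x, hxK, hxA, rfl⟩ := step_incr hAK h5.1 hCK
    have hchC : ChainTo F (insert x A') :=
      ChainTo.cons x hA hxA (h4 _ (by simp))
    exact chainTo_of_path (insert x A' :: rest) (insert x A') K rfl h2
      (by simp only [List.length_cons]; omega)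
      (fun S hS => h4 S (List.mem_cons_of_mem _ hS)) h5.2
      (insert_subset hxK hAK) hchC

lemma chainTo_of_tight {F : Finset (Finset α)} (hem : (∅ : Finset α) ∈ F) {K : Finset α}
    {p : List (Finset α)} (hp : IsTightPath F ∅ K p) : ChainTo F K := by
  obtain ⟨h1, h2, h3, h4, h5⟩ := hp
  exact chainTo_of_path p ∅ K h1 h2 h3 h4 h5 (empty_subset K) (ChainTo.nil hem)

lemma mem_span_iff {B : Finset (Finset α)} {S : Finset α} :
    S ∈ Span B ↔ ∃ H, H ⊆ B ∧ H.Nonempty ∧ H.sup id = S := by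
  simp only [Span, mem_image, mem_filter, mem_powerset]
  tauto

/-- Accessibility: any nonempty union of base elements can lose a point within `F`. -/
lemma acc_aux {F B : Finset (Finset α)} (hF : UnionClosed F) (hBF : B ⊆ F)
    (hem : (∅ : Finset α) ∈ F) (hbase : ∀ K ∈ B, ChainTo F K) :
    ∀ (n : ℕ) (H : Finset (Finset α)), H.card ≤ n → H ⊆ B → H.sup id ≠ ∅ →
      ∃ x ∈ H.sup id, (H.sup id) \ {x} ∈ F := by
  intro n
  induction n with
  | zero =>
    intro H hcard _ hne
    rw [Finset.card_eq_zero.mp (Nat.le_zero.mp hcard)] at hne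
    simp at hne
  | succ n ih =>
    intro H hcard hHB hne
    have hex : ∃ K ∈ H, K ≠ ∅ := by
      by_contra h
      push_neg at h
      exact hne (by
        rw [← Finset.bot_eq_empty]
        exact (Finset.sup_eq_bot_iff _ _).mpr (by simpa [Finset.bot_eq_empty] using h))
    obtain ⟨K, hKH, hKne⟩ := hex
    have hsup : H.sup id = K ∪ (H.erase K).sup id := by
      conv_lhs => rw [← Finset.insert_erase hKH]
      rw [Finset.sup_insert, Finset.sup_eq_union]
      rfl
    by_cases hKL : K ⊆ (H.erase K).sup id
    · have heq : H.sup id = (H.erase K).sup id := by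
        rw [hsup]; exact union_eq_right.mpr hKL
      rw [heq] at hne ⊢
      exact ih (H.erase K)
        (by have := Finset.card_erase_of_mem hKH; have := Finset.card_pos.mpr ⟨K, hKH⟩; omega)
        ((erase_subset _ _).trans hHB) hne
    · have hL : (H.erase K).sup id ∈ F := by
        rcases (H.erase K).eq_empty_or_nonempty with h | h
        · rw [h]; simpa using hem
        · exact hF _ (((erase_subset _ _).trans hHB).trans hBF) h
      obtain ⟨x, _, hxK, hmem⟩ := (hbase K (hHB hKH)).removal hF _ hL hKL
      refine ⟨x, ?_, ?_⟩
      · rw [hsup]; exact mem_union_left _ hxK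
      · rw [hsup, union_comm]; exact hmem

/-- Every member of `F` carries an increasing chain. -/
lemma chainTo_all {F B : Finset (Finset α)} (hF : UnionClosed F) (hB : IsBase B F)
    (hem : (∅ : Finset α) ∈ F) (hbase : ∀ K ∈ B, ChainTo F K) :
    ∀ (n : ℕ) (K : Finset α), K.card ≤ n → K ∈ F → ChainTo F K := by
  intro n
  induction n with
  | zero =>
    intro K hcard _
    rw [Finset.card_eq_zero.mp (Nat.le_zero.mp hcard)]
    exact ChainTo.nil hem
  | succ n ih =>
    intro K hcard hKF
    rcases eq_or_ne K ∅ with rfl | hne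
    · exact ChainTo.nil hem
    · have hspan : K ∈ Span B := by rw [hB.2.1]; exact hKF
      obtain ⟨H, hHB, _, hHsup⟩ := mem_span_iff.mp hspan
      obtain ⟨x, hxK, hmem⟩ :=
        acc_aux hF hB.1 hem hbase H.card H le_rfl hHB (by rw [hHsup]; exact hne)
      rw [hHsup] at hxK hmem
      have hcard' : (K \ {x}).card ≤ n := by
        rw [← erase_eq, card_erase_of_mem hxK]
        omega
      have hch : ChainTo F (K \ {x}) := ih _ hcard' hmem
      have hx' : x ∉ K \ {x} := by simp
      have heq : insert x (K \ {x}) = K := by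
        ext z
        simp only [mem_insert, mem_sdiff, mem_singleton]
        rcases eq_or_ne z x with rfl | h
        · simp [hxK]
        · simp [h]
      have := ChainTo.cons x hch hx' (by rw [heq]; exact hKF)
      rwa [heq] at this

/-- The key step: a neighbor of `P` one unit closer to `Q`. -/
lemma neighbor {F : Finset (Finset α)} (hF : UnionClosed F)
    (hall : ∀ K ∈ F, ChainTo F K) {P Q : Finset α}
    (hP : P ∈ F) (hQ : Q ∈ F) (hne : P ≠ Q) :
    ∃ R ∈ F, (symmDiff P R).card = 1 ∧ (symmDiff R Q).card + 1 = (symmDiff P Q).card := by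
  by_cases hQP : Q ⊆ P
  · have hPQ : ¬ P ⊆ Q := fun h => hne (Subset.antisymm h hQP)
    obtain ⟨x, hxQ, hxP, hmem⟩ := (hall P hP).removal hF Q hQ hPQ
    rw [union_eq_right.mpr hQP] at hmem
    refine ⟨P \ {x}, hmem, ?_, ?_⟩
    · have heq : symmDiff P (P \ {x}) = {x} := by
        ext z
        simp only [Finset.mem_symmDiff, mem_sdiff, mem_singleton]
        rcases eq_or_ne z x with rfl | h
        · simp [hxP]
        · tauto
      rw [heq, card_singleton]
    · have h1 : symmDiff (P \ {x}) Q = (symmDiff P Q).erase x := by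
        ext z
        simp only [Finset.mem_symmDiff, mem_sdiff, mem_singleton, mem_erase]
        rcases eq_or_ne z x with rfl | h
        · simp [hxQ]
        · tauto
      have h2 : x ∈ symmDiff P Q := by simp [Finset.mem_symmDiff, hxP, hxQ]
      rw [h1, card_erase_of_mem h2]
      have := card_pos.mpr ⟨x, h2⟩
      omega
  · obtain ⟨x, hxQ, hxP, hmem⟩ := (hall Q hQ).exchange hF P hP hQP
    refine ⟨insert x P, hmem, ?_, ?_⟩
    · have heq : symmDiff P (insert x P) = {x} := by
        ext z
        simp only [Finset.mem_symmDiff, mem_insert, mem_singleton]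
        rcases eq_or_ne z x with rfl | h
        · simp [hxP]
        · simp [h]
      rw [heq, card_singleton]
    · have h1 : symmDiff (insert x P) Q = (symmDiff P Q).erase x := by
        ext z
        simp only [Finset.mem_symmDiff, mem_insert, mem_erase]
        rcases eq_or_ne z x with rfl | h
        · simp [hxQ]
        · tauto
      have h2 : x ∈ symmDiff P Q := by simp [Finset.mem_symmDiff, hxP, hxQ]
      rw [h1, card_erase_of_mem h2]
      have := card_pos.mpr ⟨x, h2⟩
      omega

/-- Building tight paths by induction on the symmetric difference. -/
lemma build_path {F : Finset (Finset α)} (hF : UnionClosed F)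
    (hall : ∀ K ∈ F, ChainTo F K) :
    ∀ (n : ℕ) (P Q : Finset α), P ∈ F → Q ∈ F → (symmDiff P Q).card = n →
      ∃ p, IsTightPath F P Q p := by
  intro n
  induction n with
  | zero =>
    intro P Q hP _ h0
    have hPQ : P = Q := by
      have h := card_eq_zero.mp h0
      rw [← Finset.bot_eq_empty] at h
      exact symmDiff_eq_bot.mp h
    subst hPQ
    exact ⟨[P], rfl, rfl, by simp [symmDiff_self], by simpa using hP, List.isChain_singleton _⟩
  | succ n ih =>
    intro P Q hP hQ hcard
    have hne : P ≠ Q := by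
      intro h
      rw [h, symmDiff_self] at hcard
      simp [Finset.bot_eq_empty] at hcard
    obtain ⟨R, hR, hPR, hRQ⟩ := neighbor hF hall hP hQ hne
    obtain ⟨p, hp1, hp2, hp3, hp4, hp5⟩ := ih R Q hR hQ (by omega)
    match p, hp1 with
    | R' :: rest, hp1 =>
      simp only [List.head?_cons, Option.some_inj] at hp1
      subst hp1
      refine ⟨P :: R' :: rest, rfl, ?_, ?_, ?_, ?_⟩
      · rw [List.getLast?_cons_cons]; exact hp2
      · simp only [List.length_cons] at hp3 ⊢
        omega
      · intro S hS
        rcases List.mem_cons.mp hS with rfl | hS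
        · exact hP
        · exact hp4 S hS
      · exact List.isChain_cons_cons.mpr ⟨hPR, hp5⟩

/-- If the base contains `∅`, then `F` is well-graded iff every base element can be
reached from `∅` by a tight path in `F`. -/
theorem wellGraded_iff_paths_from_empty (F B : Finset (Finset α)) (hF : UnionClosed F)
    (hB : IsBase B F) (hempty : (∅ : Finset α) ∈ B) :
    WellGraded F ↔ ∀ K ∈ B, ∃ p, IsTightPath F ∅ K p := by
  have hemF : (∅ : Finset α) ∈ F := hB.1 hempty
  constructor
  · intro hW K hK
    rcases eq_or_ne (∅ : Finset α) K with rfl | hne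
    · exact ⟨[∅], rfl, rfl, by simp [symmDiff_self], by simpa using hemF,
        List.isChain_singleton _⟩
    · exact hW ∅ hemF K (hB.1 hK) hne
  · intro hpaths
    have hbase : ∀ K ∈ B, ChainTo F K := by
      intro K hK
      obtain ⟨p, hp⟩ := hpaths K hK
      exact chainTo_of_tight hemF hp
    have hall : ∀ K ∈ F, ChainTo F K := fun K hK =>
      chainTo_all hF hB hemF hbase K.card K le_rfl hK
    intro P hP Q hQ _
    exact build_path hF hall _ P Q hP hQ rfl
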